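/- Let i* ∈ {1, …, n} and j* ∈ {1, …, m} be vertex indices such that R(i*) = max_{x ∈ [1,n]} R(x) and B(j*) = min_{y ∈ [1,m]} B(y) (so R(i*) and B(j*) form a bichromatic closest pair of R and B). Then max( d_F(R|[1, i*], B|[1, j*]), d_F(R|[i*, n], B|[j*, m]) ) = d_F(R, B); in particular, there is a Fréchet matching between R and B that matches R(i*) to B(j*). -/
import Mathlib


open Set

noncomputable section

/-- `R : [1, n] → ℝ` is a one-dimensional polygonal curve with vertices
`R 1, …, R n`: it is affine on each interval `[k, k+1]`. -/
def IsPoly1D (R : ℝ → ℝ) (n : ℕ) : Prop :=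
  ∀ k : ℕ, 1 ≤ k → k < n → ∀ x ∈ Icc (k : ℝ) ((k : ℝ) + 1),
    R x = R (k : ℝ) + (x - (k : ℝ)) * (R ((k : ℝ) + 1) - R (k : ℝ))

/-- A reparameterization of `[a, b]`: a nondecreasing surjection `[0,1] → [a, b]`. -/
def IsRepar1 (f : ℝ → ℝ) (a b : ℝ) : Prop :=
  MonotoneOn f (Icc 0 1) ∧ MapsTo f (Icc 0 1) (Icc a b) ∧ SurjOn f (Icc 0 1) (Icc a b)

/-- The cost of a matching `(f, g)` between one-dimensional curves. -/
def cost1 (R B : ℝ → ℝ) (f g : ℝ → ℝ) : ℝ :=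
  sSup {c : ℝ | ∃ t ∈ Icc (0:ℝ) 1, c = |R (f t) - B (g t)|}

/-- The Fréchet distance between the subcurves `R|[a, b]` and `B|[c, d]` of
one-dimensional curves `R` and `B`. -/
def dF1 (R B : ℝ → ℝ) (a b c d : ℝ) : ℝ :=
  sInf {x : ℝ | ∃ f g : ℝ → ℝ, IsRepar1 f a b ∧ IsRepar1 g c d ∧ x = cost1 R B f g}

section Helpers

lemma repar_zero {f : ℝ → ℝ} {a b : ℝ} (h : IsRepar1 f a b) (hab : a ≤ b) : f 0 = a := by
  obtain ⟨hm, hmap, hs⟩ := h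
  obtain ⟨s, hs01, hfs⟩ := hs ⟨le_refl a, hab⟩
  have h1 : f 0 ≤ f s := hm ⟨le_refl 0, zero_le_one⟩ hs01 hs01.1
  have h2 : a ≤ f 0 := (hmap ⟨le_refl 0, zero_le_one⟩).1
  rw [hfs] at h1
  linarith

lemma repar_one {f : ℝ → ℝ} {a b : ℝ} (h : IsRepar1 f a b) (hab : a ≤ b) : f 1 = b := by
  obtain ⟨hm, hmap, hs⟩ := h
  obtain ⟨s, hs01, hfs⟩ := hs ⟨hab, le_refl b⟩
  have h1 : f s ≤ f 1 := hm hs01 ⟨zero_le_one, le_refl 1⟩ hs01.2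
  have h2 : f 1 ≤ b := (hmap ⟨zero_le_one, le_refl 1⟩).2
  rw [hfs] at h1
  linarith

lemma repar_linear (a b : ℝ) (hab : a ≤ b) : IsRepar1 (fun t => a + t * (b - a)) a b := by
  refine ⟨?_, ?_, ?_⟩
  · intro x _ y _ hxy
    have : b - a ≥ 0 := by linarith
    dsimp only
    nlinarith
  · intro t ht
    constructor
    · dsimp only; nlinarith [ht.1, ht.2, sub_nonneg.2 hab]
    · dsimp only; nlinarith [ht.1, ht.2, sub_nonneg.2 hab]
  · intro y hy
    rcases eq_or_lt_of_le hab with h | h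
    · exact ⟨0, ⟨le_refl 0, zero_le_one⟩, by simp; have := hy.1; have := hy.2; linarith⟩
    · refine ⟨(y - a) / (b - a), ⟨?_, ?_⟩, ?_⟩
      · exact div_nonneg (by linarith [hy.1]) (by linarith)
      · rw [div_le_one (by linarith)]; linarith [hy.2]
      · show a + (y - a) / (b - a) * (b - a) = y
        rw [div_mul_cancel₀ _ (by linarith : b - a ≠ 0)]; ring

/-- truncate-and-scale with a `min` cap. -/
lemma repar_min {f : ℝ → ℝ} {a b v t0 t1 : ℝ} (hf : IsRepar1 f a b)
    (ht0 : t0 ∈ Icc (0:ℝ) 1) (ht1 : t1 ∈ Icc (0:ℝ) 1) (h10 : t1 ≤ t0)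
    (hv : f t1 = v) :
    IsRepar1 (fun u => min (f (t0 * u)) v) a v := by
  obtain ⟨hm, hmap, hs⟩ := hf
  have hsub : ∀ u ∈ Icc (0:ℝ) 1, t0 * u ∈ Icc (0:ℝ) 1 := by
    intro u hu
    constructor
    · exact mul_nonneg ht0.1 hu.1
    · calc t0 * u ≤ t0 * 1 := by nlinarith [hu.2, ht0.1]
        _ ≤ 1 := by linarith [ht0.2]
  have hav : a ≤ v := hv ▸ (hmap ht1).1
  refine ⟨?_, ?_, ?_⟩
  · intro x hx y hy hxy
    exact min_le_min (hm (hsub x hx) (hsub y hy) (by nlinarith [ht0.1])) (le_refl v)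
  · intro u hu
    exact ⟨le_min (hmap (hsub u hu)).1 hav, min_le_right _ _⟩
  · intro y hy
    have hyb : y ∈ Icc a b := ⟨hy.1, hy.2.trans (hv ▸ (hmap ht1).2)⟩
    obtain ⟨s, hs01, hfs⟩ := hs hyb
    set s2 := min s t1 with hs2
    have hs201 : s2 ∈ Icc (0:ℝ) 1 := ⟨le_min hs01.1 ht1.1, (min_le_left _ _).trans hs01.2⟩
    have hs2t0 : s2 ≤ t0 := (min_le_right _ _).trans h10
    have hval : min (f s2) v = y := by
      rcases le_total s t1 with h | h
      · rw [hs2, min_eq_left h, hfs, min_eq_left hy.2]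
      · have : v ≤ y := by
          rw [← hfs, ← hv]; exact hm ht1 hs01 h
        have hyv : y = v := le_antisymm hy.2 this
        rw [hs2, min_eq_right h, hv, min_self, hyv]
    by_cases ht00 : t0 = 0
    · refine ⟨0, ⟨le_refl 0, zero_le_one⟩, ?_⟩
      have hs20 : s2 = 0 := le_antisymm (ht00 ▸ hs2t0) hs201.1
      show min (f (t0 * 0)) v = y
      rw [mul_zero, ← hs20]
      exact hval
    · have ht0pos : 0 < t0 := lt_of_le_of_ne ht0.1 (Ne.symm ht00)
      refine ⟨s2 / t0, ⟨div_nonneg hs201.1 ht0.1, by rw [div_le_one ht0pos]; exact hs2t0⟩, ?_⟩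
      show min (f (t0 * (s2 / t0))) v = y
      rw [mul_comm, div_mul_cancel₀ _ ht00]; exact hval

/-- shift-and-scale with a `max` floor. -/
lemma repar_max {f : ℝ → ℝ} {a b v t0 t1 : ℝ} (hf : IsRepar1 f a b)
    (ht0 : t0 ∈ Icc (0:ℝ) 1) (ht1 : t1 ∈ Icc (0:ℝ) 1) (h01 : t0 ≤ t1)
    (hv : f t1 = v) :
    IsRepar1 (fun u => max (f (t0 + u * (1 - t0))) v) v b := by
  obtain ⟨hm, hmap, hs⟩ := hf
  have hsub : ∀ u ∈ Icc (0:ℝ) 1, t0 + u * (1 - t0) ∈ Icc (0:ℝ) 1 := by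
    intro u hu
    constructor
    · nlinarith [hu.1, ht0.1, ht0.2, hu.2]
    · nlinarith [hu.1, ht0.1, ht0.2, hu.2]
  have hvb : v ≤ b := hv ▸ (hmap ht1).2
  refine ⟨?_, ?_, ?_⟩
  · intro x hx y hy hxy
    refine max_le_max (hm (hsub x hx) (hsub y hy) ?_) (le_refl v)
    nlinarith [ht0.2]
  · intro u hu
    exact ⟨le_max_right _ _, max_le (hmap (hsub u hu)).2 hvb⟩
  · intro y hy
    have hyb : y ∈ Icc a b := ⟨(hv ▸ (hmap ht1).1).trans hy.1, hy.2⟩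
    obtain ⟨s, hs01, hfs⟩ := hs hyb
    set s2 := max s t1 with hs2
    have hs201 : s2 ∈ Icc (0:ℝ) 1 := ⟨hs01.1.trans (le_max_left _ _), max_le hs01.2 ht1.2⟩
    have hs2t0 : t0 ≤ s2 := h01.trans (le_max_right _ _)
    have hval : max (f s2) v = y := by
      rcases le_total t1 s with h | h
      · rw [hs2, max_eq_left h, hfs, max_eq_left hy.1]
      · have : y ≤ v := by
          rw [← hfs, ← hv]; exact hm hs01 ht1 h
        have hyv : y = v := le_antisymm this hy.1
        rw [hs2, max_eq_right h, hv, max_self, hyv]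
    by_cases ht00 : t0 = 1
    · refine ⟨0, ⟨le_refl 0, zero_le_one⟩, ?_⟩
      have : s2 = 1 := le_antisymm hs201.2 (ht00 ▸ hs2t0)
      simp only [zero_mul, add_zero]
      rw [ht00, ← this]; exact hval
    · have ht0lt : t0 < 1 := lt_of_le_of_ne ht0.2 ht00
      refine ⟨(s2 - t0) / (1 - t0), ⟨div_nonneg (by linarith) (by linarith), ?_⟩, ?_⟩
      · rw [div_le_one (by linarith)]; linarith [hs201.2]
      · show max (f (t0 + (s2 - t0) / (1 - t0) * (1 - t0))) v = y
        rw [div_mul_cancel₀ _ (by linarith : (1:ℝ) - t0 ≠ 0),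
          show t0 + (s2 - t0) = s2 by ring]
        exact hval

/-- gluing two reparameterizations. -/
lemma repar_glue {f1 f2 : ℝ → ℝ} {a c b : ℝ} (h1 : IsRepar1 f1 a c) (h2 : IsRepar1 f2 c b)
    (hac : a ≤ c) (hcb : c ≤ b) :
    IsRepar1 (fun t => if t ≤ 1/2 then f1 (2*t) else f2 (2*t - 1)) a b := by
  have hf11 : f1 1 = c := repar_one h1 hac
  have hf20 : f2 0 = c := repar_zero h2 hcb
  obtain ⟨hm1, hmap1, hs1⟩ := h1
  obtain ⟨hm2, hmap2, hs2⟩ := h2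
  have hs1' : ∀ t : ℝ, t ∈ Icc (0:ℝ) 1 → t ≤ 1/2 → (2*t) ∈ Icc (0:ℝ) 1 :=
    fun t ht h => ⟨by linarith [ht.1], by linarith⟩
  have hs2' : ∀ t : ℝ, t ∈ Icc (0:ℝ) 1 → 1/2 ≤ t → (2*t - 1) ∈ Icc (0:ℝ) 1 :=
    fun t ht h => ⟨by linarith, by linarith [ht.2]⟩
  refine ⟨?_, ?_, ?_⟩
  · intro x hx y hy hxy
    dsimp only
    by_cases hx2 : x ≤ 1/2 <;> by_cases hy2 : y ≤ 1/2
    · simp only [hx2, hy2, if_true]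
      exact hm1 (hs1' x hx hx2) (hs1' y hy hy2) (by linarith)
    · simp only [hx2, hy2, if_true, if_false]
      calc f1 (2*x) ≤ f1 1 := hm1 (hs1' x hx hx2) ⟨zero_le_one, le_refl 1⟩ (by linarith)
        _ = f2 0 := by rw [hf11, hf20]
        _ ≤ f2 (2*y - 1) := hm2 ⟨le_refl 0, zero_le_one⟩ (hs2' y hy (by linarith [(not_le.1 hy2)])) (by linarith [(not_le.1 hy2)])
    · exact absurd (hxy.trans hy2) hx2
    · simp only [hx2, hy2, if_false]
      exact hm2 (hs2' x hx (by linarith [(not_le.1 hx2)])) (hs2' y hy (by linarith [(not_le.1 hy2)])) (by linarith)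
  · intro t ht
    dsimp only
    by_cases ht2 : t ≤ 1/2
    · simp only [ht2, if_true]
      have := hmap1 (hs1' t ht ht2)
      exact ⟨this.1, this.2.trans hcb⟩
    · simp only [ht2, if_false]
      have := hmap2 (hs2' t ht (by linarith [(not_le.1 ht2)]))
      exact ⟨hac.trans this.1, this.2⟩
  · intro y hy
    rcases le_total y c with h | h
    · obtain ⟨s, hs01, hfs⟩ := hs1 ⟨hy.1, h⟩
      refine ⟨s/2, ⟨by linarith [hs01.1], by linarith [hs01.2]⟩, ?_⟩
      have hle : s/2 ≤ 1/2 := by linarith [hs01.2]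
      simp only [hle, if_true]
      rw [show 2*(s/2) = s by ring]; exact hfs
    · obtain ⟨s, hs01, hfs⟩ := hs2 ⟨h, hy.2⟩
      by_cases hs0 : s = 0
      · refine ⟨1/2, ⟨by norm_num, by norm_num⟩, ?_⟩
        simp only [le_refl, if_true]
        rw [show 2*(1/2 : ℝ) = 1 by norm_num, hf11, ← hf20, ← hs0, hfs]
      · have hs0' : 0 < s := lt_of_le_of_ne hs01.1 (Ne.symm hs0)
        refine ⟨(s+1)/2, ⟨by linarith, by linarith [hs01.2]⟩, ?_⟩
        have hgt : ¬ ((s+1)/2 ≤ 1/2) := by push_neg; linarith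
        simp only [hgt, if_false]
        rw [show 2*((s+1)/2) - 1 = s by ring]; exact hfs

lemma poly_bdd {R : ℝ → ℝ} {n : ℕ} (hn : 1 ≤ n) (hR : IsPoly1D R n) :
    ∃ M : ℝ, ∀ x ∈ Icc (1:ℝ) n, |R x| ≤ M := by
  have hne : (Finset.Icc 1 n).Nonempty := ⟨1, Finset.mem_Icc.2 ⟨le_refl 1, hn⟩⟩
  refine ⟨(Finset.Icc 1 n).sup' hne (fun k : ℕ => |R (k : ℝ)|), ?_⟩
  intro x hx
  rcases eq_or_lt_of_le hn with h1 | h1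
  · have hx1 : x = 1 := by
      have := hx.1; have := hx.2
      have : (n : ℝ) = 1 := by rw [← h1]; norm_num
      linarith [hx.1, hx.2, this ▸ hx.2]
    have : x = ((1 : ℕ) : ℝ) := by rw [hx1]; norm_num
    rw [this]
    exact Finset.le_sup' (fun k : ℕ => |R (k : ℝ)|) (Finset.mem_Icc.2 ⟨le_refl 1, hn⟩)
  · -- n ≥ 2
    set k := min (⌊x⌋.toNat) (n - 1) with hk
    have hfl1 : 1 ≤ ⌊x⌋ := Int.le_floor.2 (by exact_mod_cast hx.1)
    have hk1 : 1 ≤ k := le_min (by omega) (by omega)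
    have hkn : k < n := by omega
    have hkx : (k : ℝ) ≤ x := by
      have h1 : (k : ℝ) ≤ (⌊x⌋.toNat : ℝ) := by
        exact_mod_cast min_le_left _ _
      have h2 : ((⌊x⌋.toNat : ℤ) : ℝ) ≤ x := by
        rw [Int.toNat_of_nonneg (by omega)]
        exact Int.floor_le x
      push_cast at h2 ⊢
      linarith
    have hxk1 : x ≤ (k : ℝ) + 1 := by
      rcases le_total (⌊x⌋.toNat) (n - 1) with h | h
      · have hkeq : k = ⌊x⌋.toNat := by omega
        have : x < (⌊x⌋ : ℝ) + 1 := Int.lt_floor_add_one x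
        have h2 : ((⌊x⌋.toNat : ℤ) : ℝ) = (⌊x⌋ : ℝ) := by
          rw [Int.toNat_of_nonneg (by omega)]
        rw [hkeq]
        push_cast at h2 ⊢
        linarith
      · have hkeq : k = n - 1 := by omega
        have : (k : ℝ) + 1 = (n : ℝ) := by
          rw [hkeq]
          have : ((n - 1 : ℕ) : ℝ) = (n : ℝ) - 1 := by
            push_cast [Nat.cast_sub hn]; ring
          rw [this]; ring
        rw [this]; exact hx.2
    have heq := hR k hk1 hkn x ⟨hkx, hxk1⟩
    set θ := x - (k : ℝ) with hθ
    have hθ0 : 0 ≤ θ := by linarith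
    have hθ1 : θ ≤ 1 := by linarith
    have hA : |R (k : ℝ)| ≤ (Finset.Icc 1 n).sup' hne (fun k : ℕ => |R (k : ℝ)|) :=
      Finset.le_sup' (fun k : ℕ => |R (k : ℝ)|) (Finset.mem_Icc.2 ⟨hk1, hkn.le⟩)
    have hC : |R ((k : ℝ) + 1)| ≤ (Finset.Icc 1 n).sup' hne (fun k : ℕ => |R (k : ℝ)|) := by
      have hmem : k + 1 ∈ Finset.Icc 1 n := Finset.mem_Icc.2 ⟨by omega, by omega⟩
      have := Finset.le_sup' (fun k : ℕ => |R (k : ℝ)|) hmem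
      push_cast at this
      exact this
    have hsplit : R x = (1 - θ) * R (k : ℝ) + θ * R ((k : ℝ) + 1) := by
      rw [heq]; ring
    rw [hsplit]
    calc |(1 - θ) * R (k : ℝ) + θ * R ((k : ℝ) + 1)|
        ≤ |(1 - θ) * R (k : ℝ)| + |θ * R ((k : ℝ) + 1)| := abs_add_le _ _
      _ = (1 - θ) * |R (k : ℝ)| + θ * |R ((k : ℝ) + 1)| := by
          rw [abs_mul, abs_mul, abs_of_nonneg (by linarith : (0:ℝ) ≤ 1 - θ),
            abs_of_nonneg hθ0]
      _ ≤ _ := by nlinarith [abs_nonneg (R (k : ℝ)), abs_nonneg (R ((k : ℝ) + 1))]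

end Helpers

/-- Let `R i*` be the maximum value of `R` on `[1, n]` and `B j*`
the minimum value of `B` on `[1, m]` (so, since the curves are separated by `0`,
they form a bichromatic closest pair). Then
`max(d_F(R|[1,i*], B|[1,j*]), d_F(R|[i*,n], B|[j*,m])) = d_F(R, B)`;
in particular some Fréchet matching matches `R i*` to `B j*`. -/
theorem closest_pair_splits_frechet
    (n m : ℕ) (hn : 1 ≤ n) (hm : 1 ≤ m)
    (R B : ℝ → ℝ) (hR : IsPoly1D R n) (hB : IsPoly1D B m)
    (hsepR : ∀ x ∈ Icc (1:ℝ) n, R x ≤ 0) (hsepB : ∀ y ∈ Icc (1:ℝ) m, 0 ≤ B y)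
    (istar jstar : ℕ) (hi1 : 1 ≤ istar) (hin : istar ≤ n)
    (hj1 : 1 ≤ jstar) (hjm : jstar ≤ m)
    (hmax : ∀ x ∈ Icc (1:ℝ) (n : ℝ), R x ≤ R (istar : ℝ))
    (hmin : ∀ y ∈ Icc (1:ℝ) (m : ℝ), B (jstar : ℝ) ≤ B y) :
    max (dF1 R B 1 (istar : ℝ) 1 (jstar : ℝ))
        (dF1 R B (istar : ℝ) (n : ℝ) (jstar : ℝ) (m : ℝ)) =
      dF1 R B 1 (n : ℝ) 1 (m : ℝ) := by
  have hi1' : (1:ℝ) ≤ (istar:ℝ) := by exact_mod_cast hi1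
  have hin' : (istar:ℝ) ≤ (n:ℝ) := by exact_mod_cast hin
  have hj1' : (1:ℝ) ≤ (jstar:ℝ) := by exact_mod_cast hj1
  have hjm' : (jstar:ℝ) ≤ (m:ℝ) := by exact_mod_cast hjm
  have hn' : (1:ℝ) ≤ (n:ℝ) := by exact_mod_cast hn
  have hm' : (1:ℝ) ≤ (m:ℝ) := by exact_mod_cast hm
  obtain ⟨MR, hMR⟩ := poly_bdd hn hR
  obtain ⟨MB, hMB⟩ := poly_bdd hm hB
  have hc0 : ∀ f g : ℝ → ℝ, 0 ≤ cost1 R B f g := by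
    intro f g
    apply Real.sSup_nonneg
    rintro c ⟨t, ht, rfl⟩
    exact abs_nonneg _
  have hbd : ∀ f g : ℝ → ℝ, (∀ t ∈ Icc (0:ℝ) 1, f t ∈ Icc (1:ℝ) (n:ℝ)) →
      (∀ t ∈ Icc (0:ℝ) 1, g t ∈ Icc (1:ℝ) (m:ℝ)) →
      BddAbove {c : ℝ | ∃ t ∈ Icc (0:ℝ) 1, c = |R (f t) - B (g t)|} := by
    intro f g hfm hgm
    refine ⟨MR + MB, ?_⟩
    rintro c ⟨t, ht, rfl⟩
    calc |R (f t) - B (g t)| ≤ |R (f t)| + |B (g t)| := by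
          rw [sub_eq_add_neg]
          exact (abs_add_le _ _).trans_eq (by rw [abs_neg])
      _ ≤ MR + MB := add_le_add (hMR _ (hfm t ht)) (hMB _ (hgm t ht))
  have key : ∀ x' y' x y : ℝ, x' ∈ Icc (1:ℝ) (n:ℝ) → y' ∈ Icc (1:ℝ) (m:ℝ) →
      R x ≤ R x' → B y' ≤ B y → |R x' - B y'| ≤ |R x - B y| := by
    intro x' y' x y hx' hy' hRle hBle
    have h1 : R x' ≤ 0 := hsepR x' hx'
    have h2 : 0 ≤ B y' := hsepB y' hy'
    rw [abs_of_nonpos (by linarith), abs_of_nonpos (by linarith)]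
    linarith
  set SL := {x : ℝ | ∃ f g : ℝ → ℝ,
    IsRepar1 f 1 (istar:ℝ) ∧ IsRepar1 g 1 (jstar:ℝ) ∧ x = cost1 R B f g} with hSL
  set SR := {x : ℝ | ∃ f g : ℝ → ℝ,
    IsRepar1 f (istar:ℝ) (n:ℝ) ∧ IsRepar1 g (jstar:ℝ) (m:ℝ) ∧ x = cost1 R B f g} with hSR
  set SA := {x : ℝ | ∃ f g : ℝ → ℝ,
    IsRepar1 f 1 (n:ℝ) ∧ IsRepar1 g 1 (m:ℝ) ∧ x = cost1 R B f g} with hSA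
  have hdL : dF1 R B 1 (istar:ℝ) 1 (jstar:ℝ) = sInf SL := by rw [hSL]; rfl
  have hdR : dF1 R B (istar:ℝ) (n:ℝ) (jstar:ℝ) (m:ℝ) = sInf SR := by rw [hSR]; rfl
  have hdA : dF1 R B 1 (n:ℝ) 1 (m:ℝ) = sInf SA := by rw [hSA]; rfl
  have hSLne : SL.Nonempty :=
    ⟨_, fun t => 1 + t * ((istar:ℝ) - 1), fun t => 1 + t * ((jstar:ℝ) - 1),
      repar_linear _ _ hi1', repar_linear _ _ hj1', rfl⟩
  have hSRne : SR.Nonempty :=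
    ⟨_, fun t => (istar:ℝ) + t * ((n:ℝ) - (istar:ℝ)),
      fun t => (jstar:ℝ) + t * ((m:ℝ) - (jstar:ℝ)),
      repar_linear _ _ hin', repar_linear _ _ hjm', rfl⟩
  have hSAne : SA.Nonempty :=
    ⟨_, fun t => 1 + t * ((n:ℝ) - 1), fun t => 1 + t * ((m:ℝ) - 1),
      repar_linear _ _ hn', repar_linear _ _ hm', rfl⟩
  have hSLbb : BddBelow SL := ⟨0, by rintro x ⟨f, g, _, _, rfl⟩; exact hc0 f g⟩
  have hSRbb : BddBelow SR := ⟨0, by rintro x ⟨f, g, _, _, rfl⟩; exact hc0 f g⟩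
  have hSAbb : BddBelow SA := ⟨0, by rintro x ⟨f, g, _, _, rfl⟩; exact hc0 f g⟩
  have partA : ∀ x ∈ SA, sInf SL ≤ x ∧ sInf SR ≤ x := by
    rintro x ⟨f, g, hf, hg, rfl⟩
    obtain ⟨t1, ht1, hft1⟩ := hf.2.2 ⟨hi1', hin'⟩
    obtain ⟨t2, ht2, hgt2⟩ := hg.2.2 ⟨hj1', hjm'⟩
    have hfm : ∀ t ∈ Icc (0:ℝ) 1, f t ∈ Icc (1:ℝ) (n:ℝ) := fun t ht => hf.2.1 ht
    have hgm : ∀ t ∈ Icc (0:ℝ) 1, g t ∈ Icc (1:ℝ) (m:ℝ) := fun t ht => hg.2.1 ht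
    have hbdfg := hbd f g hfm hgm
    constructor
    · -- left piece
      have ht0 : max t1 t2 ∈ Icc (0:ℝ) 1 :=
        ⟨ht1.1.trans (le_max_left _ _), max_le ht1.2 ht2.2⟩
      have hF := repar_min hf ht0 ht1 (le_max_left _ _) hft1
      have hG := repar_min hg ht0 ht2 (le_max_right _ _) hgt2
      refine le_trans (csInf_le hSLbb ⟨_, _, hF, hG, rfl⟩) ?_
      refine Real.sSup_le ?_ (hc0 f g)
      rintro c ⟨u, hu, rfl⟩
      have htu : max t1 t2 * u ∈ Icc (0:ℝ) 1 :=
        ⟨mul_nonneg ht0.1 hu.1, by nlinarith [ht0.1, ht0.2, hu.1, hu.2]⟩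
      show |R (min (f (max t1 t2 * u)) (istar:ℝ)) - B (min (g (max t1 t2 * u)) (jstar:ℝ))|
        ≤ cost1 R B f g
      set t := max t1 t2 * u
      have h1 : R (f t) ≤ R (min (f t) (istar:ℝ)) := by
        rcases min_cases (f t) (istar:ℝ) with ⟨h, _⟩ | ⟨h, _⟩
        · rw [h]
        · rw [h]; exact hmax _ (hfm t htu)
      have h2 : B (min (g t) (jstar:ℝ)) ≤ B (g t) := by
        rcases min_cases (g t) (jstar:ℝ) with ⟨h, _⟩ | ⟨h, _⟩
        · rw [h]
        · rw [h]; exact hmin _ (hgm t htu)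
      have hx' : min (f t) (istar:ℝ) ∈ Icc (1:ℝ) (n:ℝ) :=
        ⟨le_min (hfm t htu).1 hi1', (min_le_left _ _).trans (hfm t htu).2⟩
      have hy' : min (g t) (jstar:ℝ) ∈ Icc (1:ℝ) (m:ℝ) :=
        ⟨le_min (hgm t htu).1 hj1', (min_le_left _ _).trans (hgm t htu).2⟩
      calc |R (min (f t) (istar:ℝ)) - B (min (g t) (jstar:ℝ))|
          ≤ |R (f t) - B (g t)| := key _ _ _ _ hx' hy' h1 h2
        _ ≤ cost1 R B f g := le_csSup hbdfg ⟨t, htu, rfl⟩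
    · -- right piece
      have ht0 : min t1 t2 ∈ Icc (0:ℝ) 1 :=
        ⟨le_min ht1.1 ht2.1, (min_le_left _ _).trans ht1.2⟩
      have hF := repar_max hf ht0 ht1 (min_le_left _ _) hft1
      have hG := repar_max hg ht0 ht2 (min_le_right _ _) hgt2
      refine le_trans (csInf_le hSRbb ⟨_, _, hF, hG, rfl⟩) ?_
      refine Real.sSup_le ?_ (hc0 f g)
      rintro c ⟨u, hu, rfl⟩
      have htu : min t1 t2 + u * (1 - min t1 t2) ∈ Icc (0:ℝ) 1 :=
        ⟨by nlinarith [ht0.1, ht0.2, hu.1, hu.2], by nlinarith [ht0.1, ht0.2, hu.1, hu.2]⟩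
      show |R (max (f (min t1 t2 + u * (1 - min t1 t2))) (istar:ℝ)) -
          B (max (g (min t1 t2 + u * (1 - min t1 t2))) (jstar:ℝ))| ≤ cost1 R B f g
      set t := min t1 t2 + u * (1 - min t1 t2)
      have h1 : R (f t) ≤ R (max (f t) (istar:ℝ)) := by
        rcases max_cases (f t) (istar:ℝ) with ⟨h, _⟩ | ⟨h, _⟩
        · rw [h]
        · rw [h]; exact hmax _ (hfm t htu)
      have h2 : B (max (g t) (jstar:ℝ)) ≤ B (g t) := by
        rcases max_cases (g t) (jstar:ℝ) with ⟨h, _⟩ | ⟨h, _⟩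
        · rw [h]
        · rw [h]; exact hmin _ (hgm t htu)
      have hx' : max (f t) (istar:ℝ) ∈ Icc (1:ℝ) (n:ℝ) :=
        ⟨hi1'.trans (le_max_right _ _), max_le (hfm t htu).2 hin'⟩
      have hy' : max (g t) (jstar:ℝ) ∈ Icc (1:ℝ) (m:ℝ) :=
        ⟨hj1'.trans (le_max_right _ _), max_le (hgm t htu).2 hjm'⟩
      calc |R (max (f t) (istar:ℝ)) - B (max (g t) (jstar:ℝ))|
          ≤ |R (f t) - B (g t)| := key _ _ _ _ hx' hy' h1 h2
        _ ≤ cost1 R B f g := le_csSup hbdfg ⟨t, htu, rfl⟩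
  have hA : max (dF1 R B 1 (istar:ℝ) 1 (jstar:ℝ))
      (dF1 R B (istar:ℝ) (n:ℝ) (jstar:ℝ) (m:ℝ)) ≤ dF1 R B 1 (n:ℝ) 1 (m:ℝ) := by
    rw [hdL, hdR, hdA]
    apply max_le
    · exact le_csInf hSAne (fun x hx => (partA x hx).1)
    · exact le_csInf hSAne (fun x hx => (partA x hx).2)
  have hB' : dF1 R B 1 (n:ℝ) 1 (m:ℝ) ≤ max (dF1 R B 1 (istar:ℝ) 1 (jstar:ℝ))
      (dF1 R B (istar:ℝ) (n:ℝ) (jstar:ℝ) (m:ℝ)) := by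
    rw [hdL, hdR, hdA]
    apply le_of_forall_pos_le_add
    intro ε hε
    obtain ⟨c1, hc1mem, hc1lt⟩ := Real.lt_sInf_add_pos hSLne hε
    obtain ⟨c2, hc2mem, hc2lt⟩ := Real.lt_sInf_add_pos hSRne hε
    obtain ⟨f1, g1, hf1, hg1, rfl⟩ := hc1mem
    obtain ⟨f2, g2, hf2, hg2, rfl⟩ := hc2mem
    have hF := repar_glue hf1 hf2 hi1' hin'
    have hG := repar_glue hg1 hg2 hj1' hjm'
    have hbd1 := hbd f1 g1 (fun t ht => ⟨(hf1.2.1 ht).1, (hf1.2.1 ht).2.trans hin'⟩)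
      (fun t ht => ⟨(hg1.2.1 ht).1, (hg1.2.1 ht).2.trans hjm'⟩)
    have hbd2 := hbd f2 g2 (fun t ht => ⟨hi1'.trans (hf2.2.1 ht).1, (hf2.2.1 ht).2⟩)
      (fun t ht => ⟨hj1'.trans (hg2.2.1 ht).1, (hg2.2.1 ht).2⟩)
    have step1 : sInf SA ≤ cost1 R B
        (fun t => if t ≤ 1/2 then f1 (2*t) else f2 (2*t - 1))
        (fun t => if t ≤ 1/2 then g1 (2*t) else g2 (2*t - 1)) :=
      csInf_le hSAbb ⟨_, _, hF, hG, rfl⟩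
    have step2 : cost1 R B
        (fun t => if t ≤ 1/2 then f1 (2*t) else f2 (2*t - 1))
        (fun t => if t ≤ 1/2 then g1 (2*t) else g2 (2*t - 1))
        ≤ max (cost1 R B f1 g1) (cost1 R B f2 g2) := by
      refine Real.sSup_le ?_ ((hc0 f1 g1).trans (le_max_left _ _))
      rintro c ⟨t, ht, rfl⟩
      by_cases h2 : t ≤ 1/2
      · simp only [h2, if_true]
        refine le_trans ?_ (le_max_left _ _)
        exact le_csSup hbd1 ⟨2*t, ⟨by linarith [ht.1], by linarith⟩, rfl⟩
      · simp only [h2, if_false]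
        refine le_trans ?_ (le_max_right _ _)
        have h2' := not_le.1 h2
        exact le_csSup hbd2 ⟨2*t - 1, ⟨by linarith, by linarith [ht.2]⟩, rfl⟩
    calc sInf SA ≤ max (cost1 R B f1 g1) (cost1 R B f2 g2) := step1.trans step2
      _ ≤ max (sInf SL + ε) (sInf SR + ε) := max_le_max hc1lt.le hc2lt.le
      _ = max (sInf SL) (sInf SR) + ε := max_add_add_right _ _ _
  rw [hdL, hdR, hdA] at hA hB' ⊢
  exact le_antisymm hA hB'
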